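/- arXiv:1511.09296 — 3 statements merged into one kernel-verified Lean document; each statement's English description precedes it below -/
import Mathlib

section
/- Let S : O(Ω) → [0,∞] be an increasing set function on the open subsets of a metric space Ω (i.e. S(A) ≤ S(B) whenever A ⊆ B are open) satisfying: (a) S(∅) = 0; (b) S is superadditive, i.e. S(A ∪ B) ≥ S(A) + S(B) for all disjoint open A, B; (c) S is subadditive, i.e. S(A ∪ B) ≤ S(A) + S(B) for all open A, B; (d) there is a finite Radon measure ν on Ω with S(A) ≤ ν(A) for all open A. Then S extends uniquely to a finite positive Radon (Borel) measure on Ω, i.e. there is a unique finite positive Borel measure λ on Ω with λ(A) = S(A) for every open A ⊆ Ω, and this measure λ is absolutely continuous with respect to ν. -/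
open MeasureTheory Set ENNReal EMetric

section DGLaux

variable {Ω : Type*} [MetricSpace Ω] [MeasurableSpace Ω] [BorelSpace Ω]

/-- Finite subadditivity of `S` on finite unions of open sets. -/
lemma DGL.finset_subadd (S : Set Ω → ℝ≥0∞)
    (hempty : S ∅ = 0)
    (hsub : ∀ A B : Set Ω, IsOpen A → IsOpen B → S (A ∪ B) ≤ S A + S B)
    {ι : Type*} (t : Finset ι) (U : ι → Set Ω) (hU : ∀ i, IsOpen (U i)) :
    S (⋃ i ∈ t, U i) ≤ ∑ i ∈ t, S (U i) := by
  classical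
  induction t using Finset.induction_on with
  | empty => simp [hempty]
  | @insert i I hiI ih =>
    rw [Finset.set_biUnion_insert, Finset.sum_insert hiI]
    calc S (U i ∪ ⋃ j ∈ I, U j) ≤ S (U i) + S (⋃ j ∈ I, U j) :=
          hsub _ _ (hU i) (isOpen_biUnion fun j _ => hU j)
      _ ≤ S (U i) + ∑ j ∈ I, S (U j) := add_le_add_right ih _

/-- Countable subadditivity of `S` on open sets, from domination by a Radon measure. -/
lemma DGL.countable_subadd (S : Set Ω → ℝ≥0∞)
    (ν : Measure Ω) [IsFiniteMeasure ν] [ν.InnerRegular]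
    (hmono : ∀ A B : Set Ω, IsOpen A → IsOpen B → A ⊆ B → S A ≤ S B)
    (hempty : S ∅ = 0)
    (hsub : ∀ A B : Set Ω, IsOpen A → IsOpen B → S (A ∪ B) ≤ S A + S B)
    (hdom : ∀ A : Set Ω, IsOpen A → S A ≤ ν A)
    (U : ℕ → Set Ω) (hU : ∀ n, IsOpen (U n)) :
    S (⋃ n, U n) ≤ ∑' n, S (U n) := by
  have hUopen : IsOpen (⋃ n, U n) := isOpen_iUnion hU
  refine ENNReal.le_of_forall_pos_le_add fun ε hε _ => ?_
  have hεne : (ε : ℝ≥0∞) ≠ 0 := by exact_mod_cast hε.ne'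
  obtain ⟨K, hKsub, hKcomp, hKlt⟩ :=
    hUopen.measurableSet.exists_isCompact_lt_add (μ := ν) (measure_ne_top ν _) hεne
  obtain ⟨t, ht⟩ := hKcomp.elim_finite_subcover U hU hKsub
  have hdiff_open : IsOpen ((⋃ n, U n) \ K) := hUopen.sdiff hKcomp.isClosed
  have hcover : (⋃ n, U n) ⊆ (⋃ i ∈ t, U i) ∪ ((⋃ n, U n) \ K) := by
    intro x hx
    by_cases hxK : x ∈ K
    · exact Or.inl (ht hxK)
    · exact Or.inr ⟨hx, hxK⟩
  have hdiff : ν ((⋃ n, U n) \ K) ≤ ε := by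
    rw [measure_diff hKsub hKcomp.isClosed.measurableSet.nullMeasurableSet
      (measure_ne_top ν K)]
    exact tsub_le_iff_left.2 hKlt.le
  calc S (⋃ n, U n)
      ≤ S ((⋃ i ∈ t, U i) ∪ ((⋃ n, U n) \ K)) :=
        hmono _ _ hUopen ((isOpen_biUnion fun i _ => hU i).union hdiff_open) hcover
    _ ≤ S (⋃ i ∈ t, U i) + S ((⋃ n, U n) \ K) :=
        hsub _ _ (isOpen_biUnion fun i _ => hU i) hdiff_open
    _ ≤ (∑ i ∈ t, S (U i)) + ε := by
        gcongr
        · exact DGL.finset_subadd S hempty hsub t U hU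
        · exact (hdom _ hdiff_open).trans hdiff
    _ ≤ (∑' n, S (U n)) + ε := by
        gcongr
        exact ENNReal.sum_le_tsum t

end DGLaux

/-- De Giorgi–Letta lemma. An increasing set function `S` on the open subsets of
a metric space `Ω`, with `S(∅) = 0`, superadditive on disjoint open sets, subadditive on open
sets, and dominated by a finite Radon measure `ν`, extends uniquely to a finite positive Borel
measure on `Ω`, which is moreover absolutely continuous with respect to `ν`. -/
theorem deGiorgi_letta
    {Ω : Type*} [MetricSpace Ω] [MeasurableSpace Ω] [BorelSpace Ω]
    (S : Set Ω → ℝ≥0∞)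
    -- `ν` is a finite Radon measure on `Ω`
    (ν : Measure Ω) [IsFiniteMeasure ν] [ν.InnerRegular] [ν.OuterRegular]
    -- `S` is increasing
    (hmono : ∀ A B : Set Ω, IsOpen A → IsOpen B → A ⊆ B → S A ≤ S B)
    -- (a)
    (hempty : S ∅ = 0)
    -- (b) `S` is superadditive
    (hsuper : ∀ A B : Set Ω, IsOpen A → IsOpen B → Disjoint A B → S A + S B ≤ S (A ∪ B))
    -- (c) `S` is subadditive
    (hsub : ∀ A B : Set Ω, IsOpen A → IsOpen B → S (A ∪ B) ≤ S A + S B)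
    -- (d) `S` is dominated by `ν`
    (hdom : ∀ A : Set Ω, IsOpen A → S A ≤ ν A) :
    ∃ lam : Measure Ω, IsFiniteMeasure lam ∧
      (∀ A : Set Ω, IsOpen A → lam A = S A) ∧
      lam ≪ ν ∧
      ∀ lam' : Measure Ω, IsFiniteMeasure lam' →
        (∀ A : Set Ω, IsOpen A → lam' A = S A) → lam' = lam := by
  classical
  -- the candidate outer measure
  set m : Set Ω → ℝ≥0∞ := fun E => ⨅ (U : Set Ω) (_ : IsOpen U) (_ : E ⊆ U), S U with hm
  have m_le : ∀ (E U : Set Ω), IsOpen U → E ⊆ U → m E ≤ S U := fun E U hUo hEU =>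
    iInf_le_of_le U (iInf_le_of_le hUo (iInf_le_of_le hEU le_rfl))
  have m_mono : ∀ {A B : Set Ω}, A ⊆ B → m A ≤ m B := by
    intro A B hAB
    exact le_iInf fun U => le_iInf fun hUo => le_iInf fun hBU => m_le _ _ hUo (hAB.trans hBU)
  have m_open : ∀ U : Set Ω, IsOpen U → m U = S U := by
    intro U hUo
    refine le_antisymm (m_le _ _ hUo Subset.rfl) ?_
    exact le_iInf fun V => le_iInf fun hVo => le_iInf fun hUV => hmono _ _ hUo hVo hUV
  have m_empty : m ∅ = 0 := by rw [m_open ∅ isOpen_empty, hempty]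
  -- existence of good open supersets
  have m_exists : ∀ (E : Set Ω) (δ : ℝ≥0∞), δ ≠ 0 →
      ∃ U : Set Ω, IsOpen U ∧ E ⊆ U ∧ S U ≤ m E + δ := by
    intro E δ hδ
    by_cases h : m E = ∞
    · exact ⟨univ, isOpen_univ, subset_univ _, by simp [h]⟩
    · have hlt : m E < m E + δ := ENNReal.lt_add_right h hδ
      have h2 : (⨅ (U : Set Ω) (_ : IsOpen U) (_ : E ⊆ U), S U) < m E + δ := hlt
      simp only [iInf_lt_iff] at h2
      obtain ⟨U, hUo, hEU, h3⟩ := h2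
      exact ⟨U, hUo, hEU, h3.le⟩
  have key := DGL.countable_subadd S ν hmono hempty hsub hdom
  -- countable subadditivity of m
  have m_subadd : ∀ s : ℕ → Set Ω, m (⋃ i, s i) ≤ ∑' i, m (s i) := by
    intro s
    refine ENNReal.le_of_forall_pos_le_add fun ε hε _ => ?_
    have hεne : (ε : ℝ≥0∞) ≠ 0 := by exact_mod_cast hε.ne'
    obtain ⟨δ, hδpos, hδsum⟩ := ENNReal.exists_pos_sum_of_countable' hεne ℕ
    have hch : ∀ n : ℕ, ∃ U : Set Ω, IsOpen U ∧ s n ⊆ U ∧ S U ≤ m (s n) + δ n :=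
      fun n => m_exists (s n) (δ n) (hδpos n).ne'
    choose U hUo hsU hSU using hch
    calc m (⋃ i, s i) ≤ S (⋃ i, U i) :=
          m_le _ _ (isOpen_iUnion hUo) (iUnion_mono hsU)
      _ ≤ ∑' n, S (U n) := key U hUo
      _ ≤ ∑' n, (m (s n) + δ n) := ENNReal.tsum_le_tsum hSU
      _ = (∑' n, m (s n)) + ∑' n, δ n := ENNReal.tsum_add
      _ ≤ (∑' n, m (s n)) + ε := add_le_add_right hδsum.le _
  -- binary subadditivity of m
  have m_union : ∀ A B : Set Ω, m (A ∪ B) ≤ m A + m B := by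
    intro A B
    refine ENNReal.le_of_forall_pos_le_add fun ε hε _ => ?_
    have hεne : (ε : ℝ≥0∞) ≠ 0 := by exact_mod_cast hε.ne'
    have h2 : (ε : ℝ≥0∞) / 2 ≠ 0 := by
      simp [ENNReal.div_eq_zero_iff, hεne]
    obtain ⟨V, hVo, hAV, hSV⟩ := m_exists A (ε / 2) h2
    obtain ⟨W, hWo, hBW, hSW⟩ := m_exists B (ε / 2) h2
    calc m (A ∪ B) ≤ S (V ∪ W) := m_le _ _ (hVo.union hWo) (union_subset_union hAV hBW)
      _ ≤ S V + S W := hsub _ _ hVo hWo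
      _ ≤ (m A + ε / 2) + (m B + ε / 2) := add_le_add hSV hSW
      _ = m A + m B + ε := by
          rw [add_add_add_comm, ENNReal.add_halves]
  -- the outer measure
  set μ : OuterMeasure Ω :=
    ⟨m, m_empty, fun h => m_mono h, fun s _ => m_subadd s⟩ with hμ
  have μ_apply : ∀ E : Set Ω, μ E = m E := fun _ => rfl
  -- it is a metric outer measure
  have hmetric : μ.IsMetric := by
    intro s t hst
    obtain ⟨r, hr0, hr⟩ := hst
    refine le_antisymm (by simpa [μ_apply] using m_union s t) ?_
    -- separating open sets
    set A : Set Ω := {x | infEdist x s < r / 2} with hA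
    set B : Set Ω := {x | infEdist x t < r / 2} with hB
    have hAo : IsOpen A := isOpen_lt continuous_infEdist continuous_const
    have hBo : IsOpen B := isOpen_lt continuous_infEdist continuous_const
    have hr2 : (0 : ℝ≥0∞) < r / 2 := ENNReal.half_pos hr0
    have hsA : s ⊆ A := fun x hx => by
      show Metric.infEDist x s < r / 2
      rw [infEdist_zero_of_mem hx]; exact hr2
    have htB : t ⊆ B := fun x hx => by
      show Metric.infEDist x t < r / 2
      rw [infEdist_zero_of_mem hx]; exact hr2
    have hdisj : Disjoint A B := by
      rw [Set.disjoint_left]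
      rintro x hxA hxB
      obtain ⟨y, hy, hxy⟩ := infEdist_lt_iff.mp hxA
      obtain ⟨z, hz, hxz⟩ := infEdist_lt_iff.mp hxB
      have : edist y z < r := by
        calc edist y z ≤ edist y x + edist x z := edist_triangle _ _ _
          _ < r / 2 + r / 2 := by
              exact ENNReal.add_lt_add (by rwa [edist_comm]) hxz
          _ = r := ENNReal.add_halves r
      exact absurd (hr y hy z hz) this.not_ge
    -- lower bound on m (s ∪ t)
    show m s + m t ≤ m (s ∪ t)
    refine le_iInf fun V => le_iInf fun hVo => le_iInf fun hstV => ?_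
    calc m s + m t ≤ S (V ∩ A) + S (V ∩ B) := by
          gcongr
          · exact m_le _ _ (hVo.inter hAo)
              (subset_inter (subset_union_left.trans hstV) hsA)
          · exact m_le _ _ (hVo.inter hBo)
              (subset_inter (subset_union_right.trans hstV) htB)
      _ ≤ S ((V ∩ A) ∪ (V ∩ B)) :=
          hsuper _ _ (hVo.inter hAo) (hVo.inter hBo)
            (hdisj.mono inter_subset_right inter_subset_right)
      _ ≤ S V := hmono _ _ ((hVo.inter hAo).union (hVo.inter hBo)) hVo
            (union_subset inter_subset_left inter_subset_left)
  have hcar : (inferInstance : MeasurableSpace Ω) ≤ μ.caratheodory := by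
    rw [BorelSpace.measurable_eq (α := Ω)]
    exact hmetric.borel_le_caratheodory
  refine ⟨μ.toMeasure hcar, ?_, ?_, ?_, ?_⟩
  · -- finiteness
    constructor
    rw [toMeasure_apply μ hcar MeasurableSet.univ, μ_apply, m_open univ isOpen_univ]
    exact lt_of_le_of_lt (hdom univ isOpen_univ) (measure_lt_top ν univ)
  · -- agrees with S on opens
    intro A hAo
    rw [toMeasure_apply μ hcar hAo.measurableSet, μ_apply, m_open A hAo]
  · -- absolute continuity
    refine Measure.AbsolutelyContinuous.mk fun B hB hνB => ?_
    rw [toMeasure_apply μ hcar hB, μ_apply]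
    refine le_antisymm (ENNReal.le_of_forall_pos_le_add fun ε hε _ => ?_) zero_le
    have hεne : (ε : ℝ≥0∞) ≠ 0 := by exact_mod_cast hε.ne'
    have hνlt : ν B < ε := by rw [hνB]; exact pos_iff_ne_zero.2 hεne
    obtain ⟨U, hBU, hUo, hνU⟩ := B.exists_isOpen_lt_of_lt _ hνlt
    calc m B ≤ S U := m_le _ _ hUo hBU
      _ ≤ ν U := hdom U hUo
      _ ≤ 0 + ε := by rw [zero_add]; exact hνU.le
  · -- uniqueness
    intro lam' _ hlam'
    refine ext_of_generate_finite {s : Set Ω | IsOpen s} ?_ ?_ ?_ ?_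
    · rw [BorelSpace.measurable_eq (α := Ω)]; rfl
    · exact fun s hs t ht _ => hs.inter ht
    · intro A hAo
      rw [hlam' A hAo, toMeasure_apply μ hcar hAo.measurableSet, μ_apply, m_open A hAo]
    · rw [hlam' univ isOpen_univ,
        toMeasure_apply μ hcar MeasurableSet.univ, μ_apply, m_open univ isOpen_univ]
end

section
/- Assume (X,d,μ) is a (G,(h_t)_{t>0})-metric measure space which is meshable and asymptotically periodic with respect to a class 𝔖(X) ⊆ B_0(X), and let S : B_0(X) → [0,∞] be a subadditive, G-invariant set function such that S(A) ≤ c·μ(A) for all A ∈ B_0(X) and some constant c > 0. Then for every Q ∈ 𝔖(X), the limit as t → ∞ of S(h_t(Q))/μ(h_t(Q)) exists and equals inf_{k ∈ ℕ*} S(h_k(𝕌))/μ(h_k(𝕌)). -/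
open MeasureTheory Set ENNReal NNReal Filter Topology

private def IsB0 {X : Type*} [MeasurableSpace X] [TopologicalSpace X] (μ : Measure X)
    (A : Set X) : Prop :=
  MeasurableSet A ∧ μ A < ⊤ ∧ μ (closure A \ interior A) = 0

private lemma isB0_union {X : Type*} [MeasurableSpace X] [TopologicalSpace X]
    {μ : Measure X} {A B : Set X} (hA : IsB0 μ A) (hB : IsB0 μ B) : IsB0 μ (A ∪ B) := by
  refine ⟨hA.1.union hB.1, ?_, ?_⟩
  · exact (measure_union_le A B).trans_lt (ENNReal.add_lt_top.mpr ⟨hA.2.1, hB.2.1⟩)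
  · have hsub : frontier (A ∪ B) ⊆ frontier A ∪ frontier B :=
      (frontier_union_subset A B).trans
        (union_subset_union inter_subset_left inter_subset_right)
    exact measure_mono_null hsub (measure_union_null hA.2.2 hB.2.2)

private lemma isB0_diff {X : Type*} [MeasurableSpace X] [TopologicalSpace X]
    {μ : Measure X} {A B : Set X} (hA : IsB0 μ A) (hB : IsB0 μ B) : IsB0 μ (A \ B) := by
  refine ⟨hA.1.diff hB.1, (measure_mono diff_subset).trans_lt hA.2.1, ?_⟩
  have hsub : frontier (A \ B) ⊆ frontier A ∪ frontier B := by
    rw [diff_eq]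
    refine (frontier_inter_subset A Bᶜ).trans ?_
    rw [frontier_compl]
    exact union_subset_union inter_subset_left inter_subset_right
  exact measure_mono_null hsub (measure_union_null hA.2.2 hB.2.2)

private lemma finset_subadd {X : Type*} [MeasurableSpace X] [TopologicalSpace X]
    (μ : Measure X) (S : Set X → ℝ≥0∞) (hS0 : S ∅ = 0)
    (hSsub : ∀ A B : Set X, IsB0 μ A → IsB0 μ B → Disjoint A B → S (A ∪ B) ≤ S A + S B)
    {ι : Type*} [DecidableEq ι] (s : Finset ι) (F : ι → Set X)
    (hB : ∀ g ∈ s, IsB0 μ (F g)) (hd : (s : Set ι).PairwiseDisjoint F) :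
    IsB0 μ (⋃ g ∈ s, F g) ∧ S (⋃ g ∈ s, F g) ≤ ∑ g ∈ s, S (F g) := by
  induction s using Finset.induction with
  | empty =>
    refine ⟨⟨?_, ?_, ?_⟩, ?_⟩ <;> simp [hS0]
  | @insert a s ha ih =>
    have hBs : ∀ g ∈ s, IsB0 μ (F g) := fun g hg => hB g (Finset.mem_insert_of_mem hg)
    have hds : (s : Set ι).PairwiseDisjoint F := by
      refine hd.subset ?_
      intro x hx
      simp only [Finset.coe_insert, Set.mem_insert_iff]
      exact Or.inr hx
    obtain ⟨hB0u, hSu⟩ := ih hBs hds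
    have hdisj : Disjoint (F a) (⋃ g ∈ s, F g) := by
      rw [Set.disjoint_iUnion₂_right]
      intro g hg
      exact hd (by simp) (by simp [hg]) (fun hEq => ha (hEq ▸ hg))
    rw [Finset.set_biUnion_insert]
    refine ⟨isB0_union (hB a (Finset.mem_insert_self a s)) hB0u, ?_⟩
    calc S (F a ∪ ⋃ g ∈ s, F g) ≤ S (F a) + S (⋃ g ∈ s, F g) :=
          hSsub _ _ (hB a (Finset.mem_insert_self a s)) hB0u hdisj
      _ ≤ S (F a) + ∑ g ∈ s, S (F g) := add_le_add_right hSu _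
      _ = ∑ g ∈ insert a s, S (F g) := by rw [Finset.sum_insert ha]

private lemma aux_BA (A B ρ : ℝ≥0∞) (hρB : ρ * A = B) : B - A ≤ (ρ - 1) * A := by
  rw [tsub_le_iff_right]
  calc B = ρ * A := hρB.symm
    _ ≤ (ρ - 1 + 1) * A := mul_le_mul_left le_tsub_add _
    _ = (ρ - 1) * A + A := by ring

private lemma aux_upper (St f Mk Mm v B ρ c δ ε L : ℝ≥0∞)
    (hMm0 : Mm ≠ 0) (hMmT : Mm ≠ ⊤)
    (hv0 : v ≠ 0) (hvT : v ≠ ⊤)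
    (hav : Mk * Mm ≤ v) (hvb : v ≤ B) (hρB : ρ * (Mk * Mm) = B)
    (hρδ : ρ - 1 ≤ δ) (hcδ : c * δ = ε / 2)
    (hSt : St ≤ Mm * f + c * (v - Mk * Mm))
    (hφ : f / Mk ≤ L + ε / 2) :
    St / v ≤ L + ε := by
  have hBA : B - Mk * Mm ≤ (ρ - 1) * (Mk * Mm) := aux_BA _ _ _ hρB
  have ht1 : Mm * f / v ≤ f / Mk := by
    calc Mm * f / v ≤ Mm * f / (Mk * Mm) := ENNReal.div_le_div_left hav _
      _ = Mm * f / (Mm * Mk) := by rw [mul_comm Mk Mm]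
      _ = f / Mk := ENNReal.mul_div_mul_left f Mk hMm0 hMmT
  have ht2 : c * (v - Mk * Mm) / v ≤ ε / 2 := by
    have h1 : v - Mk * Mm ≤ (ρ - 1) * v := by
      calc v - Mk * Mm ≤ B - Mk * Mm := tsub_le_tsub_right hvb _
        _ ≤ (ρ - 1) * (Mk * Mm) := hBA
        _ ≤ (ρ - 1) * v := mul_le_mul_right hav _
    calc c * (v - Mk * Mm) / v ≤ c * ((ρ - 1) * v) / v :=
          ENNReal.div_le_div_right (mul_le_mul_right h1 c) v
      _ = c * (ρ - 1) * (v / v) := by rw [← mul_assoc, mul_div_assoc]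
      _ = c * (ρ - 1) := by rw [ENNReal.div_self hv0 hvT, mul_one]
      _ ≤ c * δ := mul_le_mul_right hρδ c
      _ = ε / 2 := hcδ
  calc St / v ≤ (Mm * f + c * (v - Mk * Mm)) / v := ENNReal.div_le_div_right hSt v
    _ = Mm * f / v + c * (v - Mk * Mm) / v := ENNReal.add_div
    _ ≤ f / Mk + ε / 2 := add_le_add ht1 ht2
    _ ≤ (L + ε / 2) + ε / 2 := add_le_add_left hφ _
    _ = L + ε := by rw [add_assoc, ENNReal.add_halves]

private lemma aux_lower (St v B A ρ c δ ε L : ℝ≥0∞)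
    (hBT : B ≠ ⊤) (hv0 : v ≠ 0) (hvT : v ≠ ⊤) (hcT : c ≠ ⊤)
    (hav : A ≤ v) (hvb : v ≤ B) (hρB : ρ * A = B) (hρδ : ρ - 1 ≤ δ) (hcδ : c * δ = ε / 2)
    (hmain : L * B ≤ St + c * (B - v)) :
    L - ε ≤ St / v := by
  rcases le_or_gt L ε with hLε | hεL
  · rw [tsub_eq_zero_of_le hLε]; exact zero_le
  rw [ENNReal.le_div_iff_mul_le (Or.inl hv0) (Or.inl hvT)]
  have hBA : B - A ≤ (ρ - 1) * A := aux_BA _ _ _ hρB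
  have hcBA : c * (B - A) ≤ ε / 2 * A := by
    calc c * (B - A) ≤ c * ((ρ - 1) * A) := mul_le_mul_right hBA c
      _ = c * (ρ - 1) * A := (mul_assoc _ _ _).symm
      _ ≤ c * δ * A := mul_le_mul_left (mul_le_mul_right hρδ c) A
      _ = ε / 2 * A := by rw [hcδ]
  have h2 : (L - ε) * v + c * (B - A) ≤ St + c * (B - A) := by
    calc (L - ε) * v + c * (B - A) ≤ (L - ε) * v + ε / 2 * A := add_le_add_right hcBA _
      _ ≤ (L - ε) * v + ε * v := add_le_add_right (mul_le_mul' ENNReal.half_le_self hav) _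
      _ = ((L - ε) + ε) * v := by ring
      _ = L * v := by rw [tsub_add_cancel_of_le hεL.le]
      _ ≤ L * B := mul_le_mul_right hvb L
      _ ≤ St + c * (B - v) := hmain
      _ ≤ St + c * (B - A) :=
          add_le_add_right (mul_le_mul_right (tsub_le_tsub_left hav B) c) St
  exact (ENNReal.add_le_add_iff_right
    (ENNReal.mul_ne_top hcT (ne_top_of_le_ne_top hBT tsub_le_self))).mp h2

/-- Subadditive theorem (Theorem 2.17, meshable case). If `(X,d,μ)` is a
`(G,(h_t)_{t>0})`-metric measure space which is meshable and asymptotically periodic with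
respect to `𝔖(X) ⊆ B_0(X)`, and `S : B_0(X) → [0,∞]` is subadditive, `G`-invariant and
satisfies `S(A) ≤ c·μ(A)`, then for every `Q ∈ 𝔖(X)`,
`lim_{t→∞} S(h_t(Q))/μ(h_t(Q)) = inf_{k ∈ ℕ*} S(h_k(𝕌))/μ(h_k(𝕌))`. -/
theorem subadditive_theorem_meshable
    {X : Type*} [MetricSpace X] [MeasurableSpace X] [BorelSpace X]
    [CompleteSpace X] [TopologicalSpace.SeparableSpace X] [LocallyCompactSpace X]
    -- `(X,d)` is a length space
    (hlength : ∀ x y : X, edist x y =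
      ⨅ (γ : ℝ → X) (_ : ContinuousOn γ (Set.Icc 0 1)) (_ : γ 0 = x) (_ : γ 1 = y),
        eVariationOn γ (Set.Icc 0 1))
    -- `μ` is a positive Radon measure on `X`
    (μ : Measure X) [μ.Regular]
    -- `G` is a subgroup of `Homeo(X)`
    (G : Set (X ≃ₜ X))
    (hGone : Homeomorph.refl X ∈ G)
    (hGmul : ∀ g₁ ∈ G, ∀ g₂ ∈ G, g₁.trans g₂ ∈ G)
    (hGinv : ∀ g ∈ G, g.symm ∈ G)
    -- `(h_t)_{t>0}` is a family of homeomorphisms of `X`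
    (h : ℝ → X ≃ₜ X)
    -- (a) `μ` is `G`-invariant
    (hGinvariant : ∀ g ∈ G, ∀ B : Set X, MeasurableSet B → μ (g '' B) = μ B)
    -- (b) the unit cell `U`
    (U : Set X) (hUmeas : MeasurableSet U)
    (hU0 : 0 < μ (interior U)) (hUfin : μ (interior U) < ⊤)
    (hUbd : μ (closure U \ interior U) = 0)
    -- (c) the axioms on `(h_t)_{t>0}`
    (hone : ∀ x : X, h 1 x = x)
    (hcomp : ∀ s t : ℝ, 0 < s → 0 < t → ∀ x : X, h (s * t) x = h s (h t x))
    (hscale : ∀ t : ℝ, 0 < t → ∀ B : Set X, MeasurableSet B →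
      μ (h t '' B) = μ (h t '' U) * μ B)
    -- `(X,d,μ)` is meshable
    (hmesh : ∀ i k : ℕ, 0 < i → 0 < k → ∃ Gik : Finset (X ≃ₜ X), (∀ g ∈ Gik, g ∈ G) ∧
      (Gik : Set (X ≃ₜ X)).PairwiseDisjoint (fun g => g '' (h k '' U)) ∧
      h (i * k) '' U = ⋃ g ∈ Gik, g '' (h k '' U))
    -- the class `𝔖(X) ⊆ B_0(X)`
    (𝔖 : Set (Set X))
    (h𝔖 : ∀ A ∈ 𝔖, MeasurableSet A ∧ μ A < ⊤ ∧ μ (closure A \ interior A) = 0)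
    -- `(X,d,μ)` is asymptotically periodic with respect to `𝔖(X)`
    (hap : ∀ A ∈ 𝔖, ∀ k : ℕ, 0 < k → ∃ tAk > (0:ℝ), ∃ km kp : ℝ → ℕ, ∃ gm gp : ℝ → X ≃ₜ X,
      (∀ t : ℝ, t ≥ tAk → 0 < km t ∧ 0 < kp t ∧ gm t ∈ G ∧ gp t ∈ G ∧
        gm t '' (h (k * km t) '' U) ⊆ h t '' A ∧
        h t '' A ⊆ gp t '' (h (k * kp t) '' U)) ∧
      Tendsto (fun t : ℝ => μ (h (kp t) '' U) / μ (h (km t) '' U)) atTop (𝓝 1))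
    -- the set function `S` on `B_0(X)`, subadditive and `G`-invariant, with `S ≤ c·μ`
    (S : Set X → ℝ≥0∞)
    (hSsub : ∀ A B : Set X,
      (MeasurableSet A ∧ μ A < ⊤ ∧ μ (closure A \ interior A) = 0) →
      (MeasurableSet B ∧ μ B < ⊤ ∧ μ (closure B \ interior B) = 0) →
      Disjoint A B → S (A ∪ B) ≤ S A + S B)
    (hSinv : ∀ A : Set X,
      (MeasurableSet A ∧ μ A < ⊤ ∧ μ (closure A \ interior A) = 0) →
      ∀ g ∈ G, S (g '' A) = S A)
    (c : ℝ≥0) (hc : 0 < c)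
    (hSle : ∀ A : Set X,
      (MeasurableSet A ∧ μ A < ⊤ ∧ μ (closure A \ interior A) = 0) →
      S A ≤ c * μ A) :
    ∀ Q ∈ 𝔖, Tendsto (fun t : ℝ => S (h t '' Q) / μ (h t '' Q)) atTop
      (𝓝 (⨅ (k : ℕ) (_ : 0 < k), S (h k '' U) / μ (h k '' U))) := by
  classical
  -- basic facts about `μ U`
  have hμUeq : μ U = μ (interior U) := by
    refine le_antisymm ?_ (measure_mono interior_subset)
    calc μ U ≤ μ (closure U) := measure_mono subset_closure
      _ ≤ μ (closure U \ interior U) + μ (interior U) :=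
          (measure_mono (subset_diff_union _ _)).trans (measure_union_le _ _)
      _ = μ (interior U) := by rw [hUbd, zero_add]
  have hμU_pos : μ U ≠ 0 := by rw [hμUeq]; exact hU0.ne'
  have hμU_fin : μ U ≠ ⊤ := by rw [hμUeq]; exact hUfin.ne
  have hB0U : IsB0 μ U := ⟨hUmeas, lt_of_le_of_lt hμUeq.le hUfin, hUbd⟩
  have him1 : ∀ A : Set X, h 1 '' A = A := fun A => by
    rw [show ⇑(h 1) = id from funext hone, Set.image_id]
  have hμU1 : μ U = 1 := by
    have h1 := hscale 1 one_pos U hUmeas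
    rw [him1] at h1
    have h2 : μ U * 1 = μ U * μ U := by rw [mul_one]; exact h1
    exact ((ENNReal.mul_right_inj hμU_pos hμU_fin).mp h2).symm
  have hmeasim : ∀ (e : X ≃ₜ X) {A : Set X}, MeasurableSet A → MeasurableSet (e '' A) :=
    fun e A hA => e.measurableEmbedding.measurableSet_image.mpr hA
  have himcomp : ∀ s t : ℝ, 0 < s → 0 < t → ∀ A : Set X,
      h (s * t) '' A = h s '' (h t '' A) := by
    intro s t hs ht A
    rw [← Set.image_comp]
    exact Set.image_congr' fun x => hcomp s t hs ht x
  have hmul : ∀ s t : ℝ, 0 < s → 0 < t →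
      μ (h (s * t) '' U) = μ (h s '' U) * μ (h t '' U) := by
    intro s t hs ht
    rw [himcomp s t hs ht U, hscale s hs _ (hmeasim (h t) hUmeas)]
  have hmne : ∀ t : ℝ, 0 < t → μ (h t '' U) ≠ 0 ∧ μ (h t '' U) ≠ ⊤ := by
    intro t ht
    have h1 : μ (h t '' U) * μ (h (1 / t) '' U) = 1 := by
      rw [← hmul t (1 / t) ht (by positivity), mul_one_div_cancel ht.ne', him1, hμU1]
    constructor
    · intro h0; rw [h0, zero_mul] at h1; exact zero_ne_one h1
    · intro h0
      rw [h0] at h1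
      rcases eq_or_ne (μ (h (1 / t) '' U)) 0 with h2 | h2
      · rw [h2, mul_zero] at h1; exact zero_ne_one h1
      · rw [ENNReal.top_mul h2] at h1; exact absurd h1 (by simp)
  have hB0h : ∀ t : ℝ, 0 < t → ∀ A : Set X, IsB0 μ A → IsB0 μ (h t '' A) := by
    intro t ht A hA
    refine ⟨hmeasim _ hA.1, ?_, ?_⟩
    · rw [hscale t ht A hA.1]
      exact (ENNReal.mul_ne_top (hmne t ht).2 hA.2.1.ne).lt_top
    · have hfr : closure (h t '' A) \ interior (h t '' A)
          = h t '' (closure A \ interior A) := by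
        rw [← Homeomorph.image_closure, ← Homeomorph.image_interior,
          ← image_diff (h t).injective]
      rw [hfr, hscale t ht _ (measurableSet_closure.diff measurableSet_interior),
        hA.2.2, mul_zero]
  have hB0g : ∀ g ∈ G, ∀ A : Set X, IsB0 μ A → IsB0 μ (g '' A) := by
    intro g hg A hA
    refine ⟨hmeasim _ hA.1, ?_, ?_⟩
    · rw [hGinvariant g hg A hA.1]; exact hA.2.1
    · have hfr : closure (g '' A) \ interior (g '' A)
          = g '' (closure A \ interior A) := by
        rw [← Homeomorph.image_closure, ← Homeomorph.image_interior,
          ← image_diff g.injective]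
      rw [hfr, hGinvariant g hg _ (measurableSet_closure.diff measurableSet_interior),
        hA.2.2]
  have hS0 : S ∅ = 0 := by
    have h1 := hSle ∅ ⟨MeasurableSet.empty, by simp, by simp⟩
    simpa using h1
  -- meshability consequences
  have hmesh' : ∀ i k : ℕ, 0 < i → 0 < k →
      μ (h ↑(i * k) '' U) = μ (h ↑i '' U) * μ (h ↑k '' U) := by
    intro i k hi hk
    have hik : ((i * k : ℕ) : ℝ) = (i : ℝ) * (k : ℝ) := by push_cast; ring
    rw [hik, hmul _ _ (Nat.cast_pos.mpr hi) (Nat.cast_pos.mpr hk)]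
  have hkey : ∀ i k : ℕ, 0 < i → 0 < k →
      S (h ↑(i * k) '' U) ≤ μ (h ↑i '' U) * S (h ↑k '' U) := by
    intro i k hi hk
    obtain ⟨Gik, hGik, hdisj, hunion⟩ := hmesh i k hi hk
    have hkR : (0 : ℝ) < (k : ℝ) := Nat.cast_pos.mpr hk
    have hB0k : IsB0 μ (h ↑k '' U) := hB0h _ hkR U hB0U
    have hBg : ∀ g ∈ Gik, IsB0 μ (g '' (h ↑k '' U)) :=
      fun g hg => hB0g g (hGik g hg) _ hB0k
    obtain ⟨hB0un, hSun⟩ := finset_subadd μ S hS0 hSsub Gik _ hBg hdisj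
    rw [← Nat.cast_mul] at hunion
    have hμun : μ (h ↑(i * k) '' U) = (Gik.card : ℝ≥0∞) * μ (h ↑k '' U) := by
      rw [hunion, measure_biUnion_finset hdisj (fun g _ => hmeasim g hB0k.1),
        Finset.sum_congr rfl (fun g hg => hGinvariant g (hGik g hg) _ hB0k.1),
        Finset.sum_const, nsmul_eq_mul]
    have hcard : (Gik.card : ℝ≥0∞) = μ (h ↑i '' U) := by
      have h2 := hmesh' i k hi hk
      rw [hμun] at h2
      exact (ENNReal.mul_left_inj (hmne _ hkR).1 (hmne _ hkR).2).mp h2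
    calc S (h ↑(i * k) '' U) ≤ ∑ g ∈ Gik, S (g '' (h ↑k '' U)) := hunion ▸ hSun
      _ = (Gik.card : ℝ≥0∞) * S (h ↑k '' U) := by
          rw [Finset.sum_congr rfl (fun g hg => hSinv _ hB0k g (hGik g hg)),
            Finset.sum_const, nsmul_eq_mul]
      _ = μ (h ↑i '' U) * S (h ↑k '' U) := by rw [hcard]
  -- the limit value
  intro Q hQ
  have hQB0 : IsB0 μ Q := h𝔖 Q hQ
  set L := ⨅ (k : ℕ) (_ : 0 < k), S (h ↑k '' U) / μ (h ↑k '' U) with hLdef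
  have hLle : ∀ k : ℕ, 0 < k → L ≤ S (h ↑k '' U) / μ (h ↑k '' U) := by
    intro k hk
    rw [hLdef]
    exact iInf₂_le k hk
  have hLfin : L ≠ ⊤ := by
    have h1 : S (h ↑(1 : ℕ) '' U) / μ (h ↑(1 : ℕ) '' U) ≤ (c : ℝ≥0∞) := by
      rw [Nat.cast_one, him1, hμU1]
      rw [show S U / 1 = S U by simp]
      calc S U ≤ c * μ U := hSle U hB0U
        _ = c := by rw [hμU1, mul_one]
    exact ne_top_of_le_ne_top coe_ne_top ((hLle 1 one_pos).trans h1)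
  have hcne0 : (c : ℝ≥0∞) ≠ 0 := by exact_mod_cast hc.ne'
  have hcnetop : (c : ℝ≥0∞) ≠ ⊤ := coe_ne_top
  rw [ENNReal.tendsto_nhds hLfin]
  intro ε hε
  obtain ⟨k, hk, hφk⟩ : ∃ k : ℕ, 0 < k ∧ S (h ↑k '' U) / μ (h ↑k '' U) < L + ε / 2 := by
    by_contra hcon
    push_neg at hcon
    have h2 : L + ε / 2 ≤ ⨅ (k : ℕ) (_ : 0 < k), S (h ↑k '' U) / μ (h ↑k '' U) :=
      le_iInf₂ hcon
    rw [← hLdef] at h2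
    exact absurd h2 (not_le.mpr (ENNReal.lt_add_right hLfin (ENNReal.half_pos hε.ne').ne'))
  obtain ⟨tAk, htAk0, km, kp, gm, gp, hAP, hten⟩ := hap Q hQ k hk
  set δ : ℝ≥0∞ := (ε / 2) / (c : ℝ≥0∞) with hδdef
  have hδ0 : δ ≠ 0 := by
    rw [hδdef, ne_eq, ENNReal.div_eq_zero_iff]
    exact not_or.mpr ⟨(ENNReal.half_pos hε.ne').ne', hcnetop⟩
  have hcδ : (c : ℝ≥0∞) * δ = ε / 2 := by
    rw [hδdef, ENNReal.mul_div_cancel hcne0 hcnetop]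
  have hev1 := (ENNReal.tendsto_nhds one_ne_top).mp hten δ (pos_iff_ne_zero.mpr hδ0)
  filter_upwards [eventually_ge_atTop tAk, hev1] with t htA hρt
  have ht0 : (0 : ℝ) < t := lt_of_lt_of_le htAk0 htA
  obtain ⟨hkm, hkp, hgmG, hgpG, hsub1, hsub2⟩ := hAP t htA
  have hkR : (0 : ℝ) < (k : ℝ) := Nat.cast_pos.mpr hk
  have hmR : (0 : ℝ) < ((km t : ℕ) : ℝ) := Nat.cast_pos.mpr hkm
  have hpR : (0 : ℝ) < ((kp t : ℕ) : ℝ) := Nat.cast_pos.mpr hkp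
  obtain ⟨hMk0, hMkT⟩ := hmne _ hkR
  obtain ⟨hMm0, hMmT⟩ := hmne _ hmR
  obtain ⟨hMp0, hMpT⟩ := hmne _ hpR
  have hkkm : (0 : ℝ) < (k : ℝ) * ((km t : ℕ) : ℝ) := mul_pos hkR hmR
  have hkkp : (0 : ℝ) < (k : ℝ) * ((kp t : ℕ) : ℝ) := mul_pos hkR hpR
  have hmnatm : μ (h ((k : ℝ) * ((km t : ℕ) : ℝ)) '' U)
      = μ (h ↑k '' U) * μ (h ↑(km t) '' U) := by
    have := hmesh' k (km t) hk hkm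
    rwa [Nat.cast_mul] at this
  have hmnatp : μ (h ((k : ℝ) * ((kp t : ℕ) : ℝ)) '' U)
      = μ (h ↑k '' U) * μ (h ↑(kp t) '' U) := by
    have := hmesh' k (kp t) hk hkp
    rwa [Nat.cast_mul] at this
  have hB0In : IsB0 μ (gm t '' (h ((k : ℝ) * ((km t : ℕ) : ℝ)) '' U)) :=
    hB0g _ hgmG _ (hB0h _ hkkm U hB0U)
  have hB0Out : IsB0 μ (gp t '' (h ((k : ℝ) * ((kp t : ℕ) : ℝ)) '' U)) :=
    hB0g _ hgpG _ (hB0h _ hkkp U hB0U)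
  have hB0htQ : IsB0 μ (h t '' Q) := hB0h t ht0 Q hQB0
  have hμIn : μ (gm t '' (h ((k : ℝ) * ((km t : ℕ) : ℝ)) '' U)) = μ (h ↑k '' U) * μ (h ↑(km t) '' U) := by
    rw [hGinvariant _ hgmG _ (hmeasim _ hUmeas), hmnatm]
  have hμOut : μ (gp t '' (h ((k : ℝ) * ((kp t : ℕ) : ℝ)) '' U)) = μ (h ↑k '' U) * μ (h ↑(kp t) '' U) := by
    rw [hGinvariant _ hgpG _ (hmeasim _ hUmeas), hmnatp]
  have hA0 : μ (h ↑k '' U) * μ (h ↑(km t) '' U) ≠ 0 := mul_ne_zero hMk0 hMm0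
  have hAT : μ (h ↑k '' U) * μ (h ↑(km t) '' U) ≠ ⊤ := ENNReal.mul_ne_top hMkT hMmT
  have hB0' : μ (h ↑k '' U) * μ (h ↑(kp t) '' U) ≠ 0 := mul_ne_zero hMk0 hMp0
  have hBT : μ (h ↑k '' U) * μ (h ↑(kp t) '' U) ≠ ⊤ := ENNReal.mul_ne_top hMkT hMpT
  have hav : μ (h ↑k '' U) * μ (h ↑(km t) '' U) ≤ μ (h t '' Q) := by
    rw [← hμIn]; exact measure_mono hsub1
  have hvb : μ (h t '' Q) ≤ μ (h ↑k '' U) * μ (h ↑(kp t) '' U) := by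
    rw [← hμOut]; exact measure_mono hsub2
  have hv0 : μ (h t '' Q) ≠ 0 := by
    intro h0
    rw [h0] at hav
    exact hA0 (le_antisymm hav zero_le)
  have hvT : μ (h t '' Q) ≠ ⊤ := ne_top_of_le_ne_top hBT hvb
  have hρB : (μ (h ↑(kp t) '' U) / μ (h ↑(km t) '' U))
      * (μ (h ↑k '' U) * μ (h ↑(km t) '' U)) = μ (h ↑k '' U) * μ (h ↑(kp t) '' U) := by
    have h1 : (μ (h ↑(kp t) '' U) / μ (h ↑(km t) '' U))
        * (μ (h ↑k '' U) * μ (h ↑(km t) '' U))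
        = (μ (h ↑(kp t) '' U) / μ (h ↑(km t) '' U) * μ (h ↑(km t) '' U))
          * μ (h ↑k '' U) := by ring
    rw [h1, ENNReal.div_mul_cancel hMm0 hMmT, mul_comm]
  have hρδ : μ (h ↑(kp t) '' U) / μ (h ↑(km t) '' U) - 1 ≤ δ :=
    tsub_le_iff_right.mpr (by rw [add_comm]; exact hρt.2)
  -- upper bound
  have hSIn : S (gm t '' (h ((k : ℝ) * ((km t : ℕ) : ℝ)) '' U))
      ≤ μ (h ↑(km t) '' U) * S (h ↑k '' U) := by
    rw [hSinv _ (hB0h _ hkkm U hB0U) (gm t) hgmG,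
      show (k : ℝ) * ((km t : ℕ) : ℝ) = ((km t * k : ℕ) : ℝ) by push_cast; ring]
    exact hkey (km t) k hkm hk
  have hμdiff : μ (h t '' Q \ gm t '' (h ((k : ℝ) * ((km t : ℕ) : ℝ)) '' U))
      = μ (h t '' Q) - μ (h ↑k '' U) * μ (h ↑(km t) '' U) := by
    rw [measure_diff hsub1 hB0In.1.nullMeasurableSet (by rw [hμIn]; exact hAT), hμIn]
  have hSt : S (h t '' Q) ≤ μ (h ↑(km t) '' U) * S (h ↑k '' U)
      + (c : ℝ≥0∞) * (μ (h t '' Q) - μ (h ↑k '' U) * μ (h ↑(km t) '' U)) := by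
    calc S (h t '' Q)
        = S (gm t '' (h ((k : ℝ) * ((km t : ℕ) : ℝ)) '' U)
            ∪ (h t '' Q \ gm t '' (h ((k : ℝ) * ((km t : ℕ) : ℝ)) '' U))) := by
          rw [union_diff_cancel hsub1]
      _ ≤ S (gm t '' (h ((k : ℝ) * ((km t : ℕ) : ℝ)) '' U))
          + S (h t '' Q \ gm t '' (h ((k : ℝ) * ((km t : ℕ) : ℝ)) '' U)) :=
          hSsub _ _ hB0In (isB0_diff hB0htQ hB0In) disjoint_sdiff_right
      _ ≤ μ (h ↑(km t) '' U) * S (h ↑k '' U)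
          + (c : ℝ≥0∞) * (μ (h t '' Q) - μ (h ↑k '' U) * μ (h ↑(km t) '' U)) := by
          refine add_le_add hSIn ?_
          calc S (h t '' Q \ gm t '' (h ((k : ℝ) * ((km t : ℕ) : ℝ)) '' U))
              ≤ c * μ (h t '' Q \ gm t '' (h ((k : ℝ) * ((km t : ℕ) : ℝ)) '' U)) :=
                hSle _ (isB0_diff hB0htQ hB0In)
            _ = c * (μ (h t '' Q) - μ (h ↑k '' U) * μ (h ↑(km t) '' U)) := by
                rw [hμdiff]
  have hupper : S (h t '' Q) / μ (h t '' Q) ≤ L + ε :=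
    aux_upper (S (h t '' Q)) (S (h ↑k '' U)) (μ (h ↑k '' U)) (μ (h ↑(km t) '' U))
      (μ (h t '' Q)) (μ (h ↑k '' U) * μ (h ↑(kp t) '' U))
      (μ (h ↑(kp t) '' U) / μ (h ↑(km t) '' U)) c δ ε L
      hMm0 hMmT hv0 hvT hav hvb hρB hρδ hcδ hSt hφk.le
  -- lower bound
  have hLB : L * (μ (h ↑k '' U) * μ (h ↑(kp t) '' U)) ≤ S (h ((k : ℝ) * ((kp t : ℕ) : ℝ)) '' U) := by
    have h1 : L ≤ S (h ((k : ℝ) * ((kp t : ℕ) : ℝ)) '' U)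
        / μ (h ((k : ℝ) * ((kp t : ℕ) : ℝ)) '' U) := by
      have h0 := hLle (k * kp t) (Nat.mul_pos hk hkp)
      rwa [Nat.cast_mul] at h0
    rw [hmnatp] at h1
    calc L * (μ (h ↑k '' U) * μ (h ↑(kp t) '' U))
        ≤ S (h ((k : ℝ) * ((kp t : ℕ) : ℝ)) '' U) / (μ (h ↑k '' U) * μ (h ↑(kp t) '' U))
          * (μ (h ↑k '' U) * μ (h ↑(kp t) '' U)) := mul_le_mul_left h1 _
      _ = S (h ((k : ℝ) * ((kp t : ℕ) : ℝ)) '' U) := ENNReal.div_mul_cancel hB0' hBT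
  have hμdiff2 : μ (gp t '' (h ((k : ℝ) * ((kp t : ℕ) : ℝ)) '' U) \ h t '' Q)
      = μ (h ↑k '' U) * μ (h ↑(kp t) '' U) - μ (h t '' Q) := by
    rw [measure_diff hsub2 hB0htQ.1.nullMeasurableSet hvT, hμOut]
  have hSOut : S (h ((k : ℝ) * ((kp t : ℕ) : ℝ)) '' U)
      ≤ S (h t '' Q)
        + (c : ℝ≥0∞) * (μ (h ↑k '' U) * μ (h ↑(kp t) '' U) - μ (h t '' Q)) := by
    calc S (h ((k : ℝ) * ((kp t : ℕ) : ℝ)) '' U)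
        = S (gp t '' (h ((k : ℝ) * ((kp t : ℕ) : ℝ)) '' U)) :=
          (hSinv _ (hB0h _ hkkp U hB0U) _ hgpG).symm
      _ = S (h t '' Q ∪ (gp t '' (h ((k : ℝ) * ((kp t : ℕ) : ℝ)) '' U) \ h t '' Q)) := by
          rw [union_diff_cancel hsub2]
      _ ≤ S (h t '' Q) + S (gp t '' (h ((k : ℝ) * ((kp t : ℕ) : ℝ)) '' U) \ h t '' Q) :=
          hSsub _ _ hB0htQ (isB0_diff hB0Out hB0htQ) disjoint_sdiff_right
      _ ≤ S (h t '' Q)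
          + (c : ℝ≥0∞) * (μ (h ↑k '' U) * μ (h ↑(kp t) '' U) - μ (h t '' Q)) := by
          refine add_le_add_right ?_ _
          calc S (gp t '' (h ((k : ℝ) * ((kp t : ℕ) : ℝ)) '' U) \ h t '' Q)
              ≤ c * μ (gp t '' (h ((k : ℝ) * ((kp t : ℕ) : ℝ)) '' U) \ h t '' Q) :=
                hSle _ (isB0_diff hB0Out hB0htQ)
            _ = c * (μ (h ↑k '' U) * μ (h ↑(kp t) '' U) - μ (h t '' Q)) := by
                rw [hμdiff2]
  have hmain : L * (μ (h ↑k '' U) * μ (h ↑(kp t) '' U))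
      ≤ S (h t '' Q)
        + (c : ℝ≥0∞) * (μ (h ↑k '' U) * μ (h ↑(kp t) '' U) - μ (h t '' Q)) :=
    hLB.trans hSOut
  have hlower : L - ε ≤ S (h t '' Q) / μ (h t '' Q) :=
    aux_lower (S (h t '' Q)) (μ (h t '' Q))
      (μ (h ↑k '' U) * μ (h ↑(kp t) '' U)) (μ (h ↑k '' U) * μ (h ↑(km t) '' U))
      (μ (h ↑(kp t) '' U) / μ (h ↑(km t) '' U)) c δ ε L
      hBT hv0 hvT hcnetop hav hvb hρB hρδ hcδ hmain
  exact Set.mem_Icc.mpr ⟨hlower, hupper⟩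
end

section
/- Let (X,d) be a complete, separable, locally compact length metric space, let Ω ⊆ X be a bounded open set, and let μ be a positive Radon measure on X which is doubling on Ω. Let S : O(Ω) → [0,∞] be an increasing set function on the open subsets of Ω with S(∅) = 0, which is superadditive (S(A ∪ B) ≥ S(A) + S(B) for disjoint open A, B), subadditive (S(A ∪ B) ≤ S(A) + S(B) for all open A, B), and satisfies S(A) ≤ ∫_A g dμ for all open A ⊆ Ω, for some nonnegative g ∈ L¹_μ(Ω). Then there exists a nonnegative λ ∈ L¹_μ(Ω) such that S(A) = ∫_A λ dμ for every open A ⊆ Ω, and for μ-a.e. x ∈ Ω the limit lim_{ρ→0} S(Q_ρ(x))/μ(Q_ρ(x)) exists and equals λ(x). -/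
open MeasureTheory Set ENNReal NNReal Filter Topology

open Metric in

private theorem aux_vitali {X : Type*} [MetricSpace X] [MeasurableSpace X] [BorelSpace X]
    [SecondCountableTopology X] (μ : Measure X) [IsLocallyFiniteMeasure μ] (Ω : Set X)
    (hΩ : MeasurableSet Ω) (C : ℝ≥0)
    (hC : ∀ x ∈ Ω, ∀ r : ℝ, 0 < r →
      μ (closedBall x (3 * r)) ≤ C * μ (closedBall x r)) :
    ∃ v : VitaliFamily (μ.restrict Ω), ∀ x : X, ∀ r : ℝ, 0 < r → closedBall x r ∈ v.setsAt x := by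
  refine ⟨⟨fun x => {a | ∃ r : ℝ, 0 < r ∧ a = closedBall x r}, ?_, ?_, ?_, ?_⟩,
    fun x r hr => ⟨r, hr, rfl⟩⟩
  · rintro x a ⟨r, hr, rfl⟩
    exact isClosed_closedBall.measurableSet
  · rintro x a ⟨r, hr, rfl⟩
    exact ⟨x, ball_subset_interior_closedBall (mem_ball_self hr)⟩
  · intro x ε hε
    exact ⟨closedBall x ε, ⟨ε, hε, rfl⟩, Subset.rfl⟩
  · intro s f fsub ffine
    set t : Set (ℝ × X × Set X) :=
      {p | p.2.1 ∈ s ∩ Ω ∧ 0 < p.1 ∧ p.2.2 ∈ f p.2.1 ∧ p.2.2 = closedBall p.2.1 p.1} with ht_def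
    have hfine : ∀ x ∈ s ∩ Ω, ∀ ε > (0:ℝ), ∃ p ∈ t, p.1 ≤ ε ∧ p.2.1 = x := by
      intro x hx ε hε
      obtain ⟨a, haf, haε⟩ := ffine x hx.1 ε hε
      obtain ⟨r, hr, rfl⟩ := fsub x hx.1 haf
      refine ⟨⟨min r ε, x, closedBall x r⟩, ⟨hx, lt_min hr hε, haf, ?_⟩, min_le_right r ε, rfl⟩
      refine Subset.antisymm ?_ (closedBall_subset_closedBall (min_le_left r ε))
      intro y hy
      rw [mem_closedBall, le_min_iff]
      exact ⟨mem_closedBall.1 hy, mem_closedBall.1 (haε hy)⟩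
    obtain ⟨u, hut, -, hudisj, hucov⟩ :=
      Vitali.exists_disjoint_covering_ae μ (s ∩ Ω) t C Prod.fst (fun p => p.2.1)
        (fun p => p.2.2)
        (fun p hp => hp.2.2.2 ▸ Subset.rfl)
        (fun p hp => by
          show μ (closedBall p.2.1 (3 * p.1)) ≤ C * μ p.2.2
          rw [hp.2.2.2]
          exact hC p.2.1 hp.1.2 p.1 hp.2.1)
        (fun p hp => by
          show (interior p.2.2).Nonempty
          rw [hp.2.2.2]
          exact ⟨p.2.1, ball_subset_interior_closedBall (mem_ball_self hp.2.1)⟩)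
        (fun p hp => by show IsClosed p.2.2; rw [hp.2.2.2]; exact isClosed_closedBall)
        hfine
    refine ⟨(fun p : ℝ × X × Set X => (p.2.1, p.2.2)) '' u, ?_, ?_, ?_, ?_⟩
    · rintro q ⟨p, hp, rfl⟩
      exact (hut hp).1.1
    · rintro q ⟨p, hp, rfl⟩ q' ⟨p', hp', rfl⟩ hne
      have hpp : p ≠ p' := by rintro rfl; exact hne rfl
      exact hudisj hp hp' hpp
    · rintro q ⟨p, hp, rfl⟩
      exact (hut hp).2.2.1
    · have hU : ⋃ q ∈ (fun p : ℝ × X × Set X => (p.2.1, p.2.2)) '' u, q.2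
          = ⋃ p ∈ u, p.2.2 := by
        rw [Set.biUnion_image]
      rw [hU]
      have h1 : s \ ⋃ p ∈ u, p.2.2 ⊆ ((s ∩ Ω) \ ⋃ p ∈ u, p.2.2) ∪ Ωᶜ := by
        intro y hy
        by_cases hyΩ : y ∈ Ω
        · exact Or.inl ⟨⟨hy.1, hyΩ⟩, hy.2⟩
        · exact Or.inr hyΩ
      refine le_antisymm ?_ zero_le
      calc (μ.restrict Ω) (s \ ⋃ p ∈ u, p.2.2)
          ≤ (μ.restrict Ω) (((s ∩ Ω) \ ⋃ p ∈ u, p.2.2) ∪ Ωᶜ) := measure_mono h1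
        _ ≤ (μ.restrict Ω) ((s ∩ Ω) \ ⋃ p ∈ u, p.2.2) + (μ.restrict Ω) Ωᶜ :=
            measure_union_le _ _
        _ ≤ μ ((s ∩ Ω) \ ⋃ p ∈ u, p.2.2) + (μ.restrict Ω) Ωᶜ := by
            gcongr
            exact Measure.restrict_le_self
        _ = 0 := by
            rw [hucov, Measure.restrict_apply hΩ.compl, compl_inter_self, measure_empty,
              zero_add]

/-- Integral representation of an increasing, superadditive, subadditive set
function dominated by `g dμ` on the open subsets of `Ω` (cf. Lemma 4.1): there is a
nonnegative `λ ∈ L¹_μ(Ω)` with `S(A) = ∫_A λ dμ` for every open `A ⊆ Ω`, and for `μ`-a.e.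
`x ∈ Ω` the limit `lim_{ρ→0} S(Q_ρ(x))/μ(Q_ρ(x))` exists and equals `λ(x)`. -/
theorem integral_representation_of_set_function
    {X : Type*} [MetricSpace X] [MeasurableSpace X] [BorelSpace X]
    [CompleteSpace X] [TopologicalSpace.SeparableSpace X] [LocallyCompactSpace X]
    -- `(X,d)` is a length space
    (hlength : ∀ x y : X, edist x y =
      ⨅ (γ : ℝ → X) (_ : ContinuousOn γ (Set.Icc 0 1)) (_ : γ 0 = x) (_ : γ 1 = y),
        eVariationOn γ (Set.Icc 0 1))
    -- `Ω ⊆ X` is a bounded open set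
    (Ω : Set X) (hΩopen : IsOpen Ω) (hΩbd : Bornology.IsBounded Ω)
    -- `μ` is a positive Radon measure on `X`, doubling on `Ω`
    (μ : Measure X) [μ.Regular]
    (Cd : ℝ≥0) (hCd : 1 ≤ Cd)
    (hdoubling : ∀ x ∈ Ω, ∀ ρ : ℝ, 0 < ρ →
      μ (Metric.ball x ρ) ≤ Cd * μ (Metric.ball x (ρ / 2)))
    -- `S` is an increasing set function on the open subsets of `Ω` with `S(∅) = 0`
    (S : Set X → ℝ≥0∞)
    (hmono : ∀ A B : Set X, IsOpen A → IsOpen B → A ⊆ B → B ⊆ Ω → S A ≤ S B)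
    (hempty : S ∅ = 0)
    -- `S` is superadditive
    (hsuper : ∀ A B : Set X, IsOpen A → IsOpen B → A ⊆ Ω → B ⊆ Ω → Disjoint A B →
      S A + S B ≤ S (A ∪ B))
    -- `S` is subadditive
    (hsub : ∀ A B : Set X, IsOpen A → IsOpen B → A ⊆ Ω → B ⊆ Ω → S (A ∪ B) ≤ S A + S B)
    -- `S(A) ≤ ∫_A g dμ` for some nonnegative `g ∈ L¹_μ(Ω)`
    (g : X → ℝ) (hg0 : ∀ x, 0 ≤ g x) (hgint : IntegrableOn g Ω μ)
    (hdom : ∀ A : Set X, IsOpen A → A ⊆ Ω → S A ≤ ENNReal.ofReal (∫ x in A, g x ∂μ)) :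
    ∃ lam : X → ℝ, (∀ x, 0 ≤ lam x) ∧ IntegrableOn lam Ω μ ∧
      (∀ A : Set X, IsOpen A → A ⊆ Ω → S A = ENNReal.ofReal (∫ x in A, lam x ∂μ)) ∧
      (∀ᵐ x ∂μ.restrict Ω,
        Tendsto (fun ρ : ℝ => S (Metric.ball x ρ) / μ (Metric.ball x ρ))
          (𝓝[>] 0) (𝓝 (ENNReal.ofReal (lam x)))) := by

  clear hlength hΩbd hCd
  haveI : SecondCountableTopology X := UniformSpace.secondCountable_of_separable X
  have hΩmeas : MeasurableSet Ω := hΩopen.measurableSet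
  set μ' : Measure X := μ.restrict Ω with hμ'def
  -- a measurable a.e. version of `g` on `Ω`, and the dominating measure `gm`
  have hgaem : AEMeasurable g μ' := hgint.aemeasurable
  set g' : X → ℝ := hgaem.mk g with hg'def
  have hg'meas : Measurable g' := hgaem.measurable_mk
  have hgg' : g =ᵐ[μ'] g' := hgaem.ae_eq_mk
  set dens : X → ℝ≥0∞ := Ω.indicator (fun x => ENNReal.ofReal (g' x)) with hdens
  have hdensmeas : Measurable dens := (ENNReal.measurable_ofReal.comp hg'meas).indicator hΩmeas
  set gm : Measure X := μ.withDensity dens with hgm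
  have hgmB : ∀ B : Set X, MeasurableSet B → B ⊆ Ω →
      gm B = ENNReal.ofReal (∫ x in B, g x ∂μ) := by
    intro B hB hBΩ
    rw [hgm, withDensity_apply _ hB]
    have h1 : ∫⁻ x in B, dens x ∂μ = ∫⁻ x in B, ENNReal.ofReal (g x) ∂μ := by
      apply lintegral_congr_ae
      have hae : ∀ᵐ x ∂μ.restrict B, g x = g' x :=
        ae_restrict_of_ae_restrict_of_subset hBΩ hgg'
      filter_upwards [hae, ae_restrict_mem hB] with x h1 h2
      rw [hdens, indicator_of_mem (hBΩ h2), ← h1]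
    rw [h1, ofReal_integral_eq_lintegral_ofReal (hgint.mono_set hBΩ) (ae_of_all _ hg0)]
  have hgmcompl : gm Ωᶜ = 0 := by
    rw [hgm, withDensity_apply _ hΩmeas.compl]
    have h0 : ∀ᵐ x ∂μ.restrict Ωᶜ, dens x = 0 := by
      filter_upwards [ae_restrict_mem hΩmeas.compl] with x hx
      rw [hdens, indicator_of_notMem hx]
    rw [lintegral_congr_ae h0, lintegral_zero]
  haveI hgmfin : IsFiniteMeasure gm := by
    constructor
    rw [← measure_add_measure_compl (μ := gm) hΩmeas, hgmcompl, add_zero,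
      hgmB Ω hΩmeas Subset.rfl]
    exact ofReal_lt_top
  have hSle : ∀ A : Set X, IsOpen A → A ⊆ Ω → S A ≤ gm A := fun A hA hAΩ =>
    (hdom A hA hAΩ).trans_eq (hgmB A hA.measurableSet hAΩ).symm
  -- finite subadditivity of S
  have hsubFin : ∀ (A : ℕ → Set X), (∀ i, IsOpen (A i)) → (∀ i, A i ⊆ Ω) → ∀ n : ℕ,
      S (⋃ i ∈ Finset.range n, A i) ≤ ∑ i ∈ Finset.range n, S (A i) := by
    intro A hAo hAΩ n
    induction n with
    | zero => simp [hempty]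
    | succ n ih =>
      rw [Finset.range_add_one, Finset.set_biUnion_insert,
        Finset.sum_insert Finset.notMem_range_self]
      calc S (A n ∪ ⋃ i ∈ Finset.range n, A i)
          ≤ S (A n) + S (⋃ i ∈ Finset.range n, A i) :=
            hsub _ _ (hAo n) (isOpen_biUnion fun i _ => hAo i) (hAΩ n)
              (iUnion₂_subset fun i _ => hAΩ i)
        _ ≤ S (A n) + ∑ i ∈ Finset.range n, S (A i) := by gcongr
  -- countable subadditivity of S on open subsets of Ω
  have hsubCount : ∀ (A : ℕ → Set X), (∀ i, IsOpen (A i)) → (∀ i, A i ⊆ Ω) →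
      S (⋃ i, A i) ≤ ∑' i, S (A i) := by
    intro A hAo hAΩ
    apply ENNReal.le_of_forall_pos_le_add
    intro ε hε _
    set D : ℕ → Set X := fun n => (⋃ i, A i) \ ⋃ i ∈ Finset.range n, A i with hD
    have hDmeas : ∀ n, NullMeasurableSet (D n) gm := fun n =>
      ((isOpen_iUnion hAo).measurableSet.diff
        (isOpen_biUnion fun i _ => hAo i).measurableSet).nullMeasurableSet
    have hDanti : Antitone D := fun a b hab =>
      diff_subset_diff_right (biUnion_subset_biUnion_left (Finset.range_subset_range.2 hab))
    have hDempty : ⋂ n, D n = ∅ := by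
      apply eq_empty_iff_forall_notMem.2
      intro y hy
      rw [mem_iInter] at hy
      obtain ⟨i, hi⟩ := mem_iUnion.1 (hy 0).1
      exact (hy (i + 1)).2 (mem_biUnion (Finset.mem_range.2 (Nat.lt_succ_self i)) hi)
    have hlim : Tendsto (gm ∘ D) atTop (𝓝 0) := by
      have h := tendsto_measure_iInter_atTop hDmeas hDanti ⟨0, (measure_lt_top gm _).ne⟩
      rwa [hDempty, measure_empty] at h
    have hev : ∀ᶠ n in atTop, gm (D n) < (ε : ℝ≥0∞) :=
      hlim.eventually_lt_const (by exact_mod_cast hε)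
    obtain ⟨n, hn⟩ := hev.exists
    obtain ⟨O, hDO, hOopen, hOlt⟩ := (D n).exists_isOpen_lt_of_lt _ hn
    set W := O ∩ Ω with hW
    have hWopen : IsOpen W := hOopen.inter hΩopen
    have hWΩ : W ⊆ Ω := inter_subset_right
    have hcover : (⋃ i, A i) ⊆ (⋃ i ∈ Finset.range n, A i) ∪ W := by
      intro y hy
      by_cases hyn : y ∈ ⋃ i ∈ Finset.range n, A i
      · exact Or.inl hyn
      · refine Or.inr ⟨hDO ⟨hy, hyn⟩, ?_⟩
        obtain ⟨i, hi⟩ := mem_iUnion.1 hy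
        exact hAΩ i hi
    calc S (⋃ i, A i) ≤ S ((⋃ i ∈ Finset.range n, A i) ∪ W) :=
          hmono _ _ (isOpen_iUnion hAo) ((isOpen_biUnion fun i _ => hAo i).union hWopen)
            hcover (union_subset (iUnion₂_subset fun i _ => hAΩ i) hWΩ)
      _ ≤ S (⋃ i ∈ Finset.range n, A i) + S W :=
          hsub _ _ (isOpen_biUnion fun i _ => hAo i) hWopen
            (iUnion₂_subset fun i _ => hAΩ i) hWΩ
      _ ≤ (∑ i ∈ Finset.range n, S (A i)) + S W := by
          gcongr
          exact hsubFin A hAo hAΩ n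
      _ ≤ (∑' i, S (A i)) + ε := by
          gcongr
          · exact ENNReal.sum_le_tsum _
          · exact (hSle W hWopen hWΩ).trans
              (((measure_mono inter_subset_left).trans hOlt.le))
  -- the outer measure associated to S
  set mfun : Set X → ℝ≥0∞ :=
    fun E => ⨅ (A : Set X) (_ : IsOpen A ∧ A ⊆ Ω ∧ E ∩ Ω ⊆ A), S A with hmfun
  have mfun_le : ∀ {E A : Set X}, IsOpen A → A ⊆ Ω → E ∩ Ω ⊆ A → mfun E ≤ S A := by
    intro E A h1 h2 h3
    exact iInf₂_le A ⟨h1, h2, h3⟩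
  have le_mfun : ∀ {E : Set X} {c : ℝ≥0∞},
      (∀ A : Set X, IsOpen A → A ⊆ Ω → E ∩ Ω ⊆ A → c ≤ S A) → c ≤ mfun E := by
    intro E c h
    exact le_iInf₂ fun A hA => h A hA.1 hA.2.1 hA.2.2
  have mfun_open : ∀ A : Set X, IsOpen A → A ⊆ Ω → mfun A = S A := by
    intro A hA hAΩ
    refine le_antisymm (mfun_le hA hAΩ inter_subset_left) ?_
    exact le_mfun fun B hB hBΩ hAB =>
      hmono A B hA hB (by rwa [inter_eq_self_of_subset_left hAΩ] at hAB) hBΩ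
  have mfun_mono : ∀ {E F : Set X}, E ⊆ F → mfun E ≤ mfun F := by
    intro E F hEF
    exact le_mfun fun A h1 h2 h3 => mfun_le h1 h2 ((inter_subset_inter_left Ω hEF).trans h3)
  have mfun_empty : mfun ∅ = 0 := by
    refine le_antisymm ?_ zero_le
    have h := mfun_le (E := (∅ : Set X)) isOpen_empty (empty_subset Ω) (by simp)
    rwa [hempty] at h
  have mfun_iUnion : ∀ E : ℕ → Set X, mfun (⋃ i, E i) ≤ ∑' i, mfun (E i) := by
    intro E
    apply ENNReal.le_of_forall_pos_le_add
    intro ε hε hfin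
    obtain ⟨δ, hδ0, hδsum⟩ := ENNReal.exists_pos_sum_of_countable' (coe_ne_zero.2 hε.ne') ℕ
    have hchoice : ∀ i, ∃ A : Set X,
        (IsOpen A ∧ A ⊆ Ω ∧ E i ∩ Ω ⊆ A) ∧ S A ≤ mfun (E i) + δ i := by
      intro i
      have hlt : mfun (E i) < mfun (E i) + δ i := by
        refine ENNReal.lt_add_right ?_ (hδ0 i).ne'
        exact ((ENNReal.le_tsum i).trans_lt hfin).ne
      simp only [hmfun] at hlt
      obtain ⟨A, hA⟩ := iInf_lt_iff.1 hlt
      obtain ⟨hAc, hAS⟩ := iInf_lt_iff.1 hA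
      exact ⟨A, hAc, hAS.le⟩
    choose A hA hAS using hchoice
    have hAopen : ∀ i, IsOpen (A i) := fun i => (hA i).1
    have hAΩ : ∀ i, A i ⊆ Ω := fun i => (hA i).2.1
    calc mfun (⋃ i, E i) ≤ S (⋃ i, A i) := by
          refine mfun_le (isOpen_iUnion hAopen) (iUnion_subset hAΩ) ?_
          rw [iUnion_inter]
          exact iUnion_mono fun i => (hA i).2.2
      _ ≤ ∑' i, S (A i) := hsubCount A hAopen hAΩ
      _ ≤ ∑' i, (mfun (E i) + δ i) := ENNReal.tsum_le_tsum hAS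
      _ = (∑' i, mfun (E i)) + ∑' i, δ i := ENNReal.tsum_add
      _ ≤ (∑' i, mfun (E i)) + ε := add_le_add_right hδsum.le _
  set m : OuterMeasure X :=
    { measureOf := mfun
      empty := mfun_empty
      mono := fun h => mfun_mono h
      iUnion_nat := fun E _ => mfun_iUnion E } with hm
  have hmapp : ∀ E : Set X, m E = mfun E := fun E => rfl
  have hmetric : m.IsMetric := by
    intro E F hEF
    refine le_antisymm (measure_union_le E F) ?_
    rw [hmapp, hmapp, hmapp]
    refine le_mfun fun A hAopen hAΩ hsubA => ?_
    obtain ⟨r, hr0, hr⟩ := hEF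
    set U := A ∩ {x | EMetric.infEdist x E < r / 2} with hU
    set V := A ∩ {x | EMetric.infEdist x F < r / 2} with hV
    have hUopen : IsOpen U :=
      hAopen.inter (isOpen_lt EMetric.continuous_infEdist continuous_const)
    have hVopen : IsOpen V :=
      hAopen.inter (isOpen_lt EMetric.continuous_infEdist continuous_const)
    have hdisj : Disjoint U V := by
      rw [Set.disjoint_left]
      rintro x ⟨-, hxE⟩ ⟨-, hxF⟩
      obtain ⟨y, hy, hxy⟩ := EMetric.infEdist_lt_iff.1 hxE
      obtain ⟨z, hz, hxz⟩ := EMetric.infEdist_lt_iff.1 hxF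
      have hlt : edist y z < r := by
        calc edist y z ≤ edist y x + edist x z := edist_triangle _ _ _
          _ < r / 2 + r / 2 := ENNReal.add_lt_add (by rwa [edist_comm]) hxz
          _ = r := ENNReal.add_halves r
      exact absurd (hr y hy z hz) (not_le.2 hlt)
    have hEU : E ∩ Ω ⊆ U := fun x hx =>
      ⟨hsubA ⟨Or.inl hx.1, hx.2⟩, by
        simp only [mem_setOf_eq]
        rw [show EMetric.infEdist x E = 0 from EMetric.infEdist_zero_of_mem hx.1]
        exact ENNReal.half_pos hr0⟩
    have hFV : F ∩ Ω ⊆ V := fun x hx =>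
      ⟨hsubA ⟨Or.inr hx.1, hx.2⟩, by
        simp only [mem_setOf_eq]
        rw [show EMetric.infEdist x F = 0 from EMetric.infEdist_zero_of_mem hx.1]
        exact ENNReal.half_pos hr0⟩
    calc mfun E + mfun F ≤ S U + S V :=
          add_le_add (mfun_le hUopen (inter_subset_left.trans hAΩ) hEU)
            (mfun_le hVopen (inter_subset_left.trans hAΩ) hFV)
      _ ≤ S (U ∪ V) := hsuper U V hUopen hVopen (inter_subset_left.trans hAΩ)
            (inter_subset_left.trans hAΩ) hdisj
      _ ≤ S A := hmono _ _ (hUopen.union hVopen) hAopen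
            (union_subset inter_subset_left inter_subset_left) hAΩ
  have hborel : (inferInstance : MeasurableSpace X) ≤ m.caratheodory :=
    (BorelSpace.measurable_eq (α := X)).le.trans hmetric.borel_le_caratheodory
  set ν : Measure X := m.toMeasure hborel with hν
  have hνapp : ∀ E : Set X, MeasurableSet E → ν E = mfun E := fun E hE =>
    toMeasure_apply m hborel hE
  have hνopen : ∀ A : Set X, IsOpen A → A ⊆ Ω → ν A = S A := fun A hA hAΩ => by
    rw [hνapp A hA.measurableSet, mfun_open A hA hAΩ]
  have hmle : ∀ E : Set X, mfun E ≤ gm (E ∩ Ω) := by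
    intro E
    apply ENNReal.le_of_forall_pos_le_add
    intro ε hε _
    obtain ⟨O, hEO, hOopen, hOlt⟩ := (E ∩ Ω).exists_isOpen_lt_of_lt _
      (ENNReal.lt_add_right (measure_ne_top gm _) (coe_ne_zero.2 hε.ne'))
    refine (mfun_le (hOopen.inter hΩopen) inter_subset_right
      (subset_inter hEO inter_subset_right)).trans ?_
    calc S (O ∩ Ω) ≤ gm (O ∩ Ω) := hSle _ (hOopen.inter hΩopen) inter_subset_right
      _ ≤ gm O := measure_mono inter_subset_left
      _ ≤ gm (E ∩ Ω) + ε := hOlt.le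
  haveI hνfin : IsFiniteMeasure ν := by
    constructor
    calc ν univ = mfun univ := hνapp univ MeasurableSet.univ
      _ ≤ gm (univ ∩ Ω) := hmle univ
      _ < ∞ := measure_lt_top gm _
  have hac : ν ≪ μ' := by
    refine Measure.AbsolutelyContinuous.mk fun E hE hE0 => ?_
    rw [hμ'def, Measure.restrict_apply hE] at hE0
    have h1 : gm (E ∩ Ω) = 0 := by
      rw [hgm, withDensity_apply _ (hE.inter hΩmeas)]
      exact setLIntegral_measure_zero _ _ hE0
    refine le_antisymm ?_ zero_le
    calc ν E = mfun E := hνapp E hE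
      _ ≤ gm (E ∩ Ω) := hmle E
      _ = 0 := h1
  -- the density
  set f : X → ℝ≥0∞ := ν.rnDeriv μ' with hfdef
  have hfmeas : Measurable f := Measure.measurable_rnDeriv ν μ'
  have hreprν : μ'.withDensity f = ν := Measure.withDensity_rnDeriv_eq ν μ' hac
  have hνE : ∀ E : Set X, MeasurableSet E → ν E = ∫⁻ x in E, f x ∂μ' := by
    intro E hE
    rw [← hreprν, withDensity_apply _ hE]
  have hflt : ∀ᵐ x ∂μ', f x < ∞ := Measure.rnDeriv_lt_top ν μ'
  have hfint : ∫⁻ x, f x ∂μ' ≠ ∞ := by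
    have h := hνE univ MeasurableSet.univ
    rw [setLIntegral_univ] at h
    rw [← h]
    exact (measure_lt_top ν univ).ne
  set lam : X → ℝ := fun x => (f x).toReal with hlamdef
  have hlam0 : ∀ x, 0 ≤ lam x := fun x => ENNReal.toReal_nonneg
  have hlamint : Integrable lam μ' :=
    integrable_toReal_of_lintegral_ne_top hfmeas.aemeasurable hfint
  have hkey : ∀ B : Set X, MeasurableSet B → B ⊆ Ω →
      ENNReal.ofReal (∫ x in B, lam x ∂μ) = ∫⁻ x in B, f x ∂μ' := by
    intro B hB hBΩ
    have hres : μ'.restrict B = μ.restrict B := Measure.restrict_restrict_of_subset hBΩ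
    have h1 : ∫ x in B, lam x ∂μ = (∫⁻ x in B, f x ∂μ').toReal := by
      rw [← hres]
      exact integral_toReal hfmeas.aemeasurable (ae_restrict_of_ae hflt)
    rw [h1, ENNReal.ofReal_toReal]
    exact ((setLIntegral_le_lintegral _ _).trans_lt (lt_top_iff_ne_top.2 hfint)).ne
  have hrep : ∀ A : Set X, IsOpen A → A ⊆ Ω → S A = ENNReal.ofReal (∫ x in A, lam x ∂μ) := by
    intro A hA hAΩ
    rw [hkey A hA.measurableSet hAΩ, ← hνE A hA.measurableSet, hνopen A hA hAΩ]
  -- the Vitali family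
  have hC3 : ∀ x ∈ Ω, ∀ r : ℝ, 0 < r →
      μ (Metric.closedBall x (3 * r)) ≤ (Cd ^ 2 : ℝ≥0) * μ (Metric.closedBall x r) := by
    intro x hx r hr
    have h2 := hdoubling x hx (4 * r) (by linarith)
    have h3 := hdoubling x hx (2 * r) (by linarith)
    rw [show (4 : ℝ) * r / 2 = 2 * r by ring] at h2
    rw [show (2 : ℝ) * r / 2 = r by ring] at h3
    calc μ (Metric.closedBall x (3 * r)) ≤ μ (Metric.ball x (4 * r)) :=
          measure_mono (Metric.closedBall_subset_ball (by linarith))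
      _ ≤ Cd * μ (Metric.ball x (2 * r)) := h2
      _ ≤ Cd * (Cd * μ (Metric.ball x r)) := by gcongr
      _ = (Cd ^ 2 : ℝ≥0) * μ (Metric.ball x r) := by
          rw [pow_two, ENNReal.coe_mul, mul_assoc]
      _ ≤ (Cd ^ 2 : ℝ≥0) * μ (Metric.closedBall x r) := by
          gcongr
          exact Metric.ball_subset_closedBall
  obtain ⟨v, hv⟩ := aux_vitali μ Ω hΩmeas (Cd ^ 2) hC3
  -- a.e. positivity of measures of balls
  have hpos : ∀ᵐ x ∂μ', ∀ ρ : ℝ, 0 < ρ → 0 < μ (Metric.ball x ρ) := by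
    set Z := {x : X | ∃ ρ : ℝ, 0 < ρ ∧ μ (Metric.ball x ρ) = 0} with hZdef
    have hZ0 : μ Z = 0 := by
      apply measure_null_of_locally_null
      rintro x ⟨ρ, hρ, hρ0⟩
      exact ⟨Metric.ball x ρ, mem_nhdsWithin_of_mem_nhds (Metric.ball_mem_nhds x hρ), hρ0⟩
    have hae : ∀ᵐ x ∂μ, x ∉ Z := measure_eq_zero_iff_ae_notMem.1 hZ0
    apply ae_restrict_of_ae
    filter_upwards [hae] with x hx ρ hρ
    rw [pos_iff_ne_zero]
    exact fun h0 => hx ⟨ρ, hρ, h0⟩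
  have havg := v.ae_tendsto_average_norm_sub hlamint.locallyIntegrable
  refine ⟨lam, hlam0, hlamint, hrep, ?_⟩
  filter_upwards [ae_restrict_mem hΩmeas, havg, hpos] with x hxΩ hxavg hxpos
  obtain ⟨ε₀, hε₀, hball₀⟩ := Metric.isOpen_iff.1 hΩopen x hxΩ
  obtain ⟨s₀, hs₀mem, hs₀fin⟩ := μ.finiteAt_nhds x
  obtain ⟨ε₁, hε₁, hcb⟩ := Metric.nhds_basis_closedBall.mem_iff.1 hs₀mem
  set q : ℝ → ℝ := fun ρ =>
    (∫ y in Metric.ball x ρ, lam y ∂μ) / (μ (Metric.ball x ρ)).toReal with hqdef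
  have hT : Tendsto (fun ρ : ℝ => Metric.closedBall x ρ) (𝓝[>] 0) (v.filterAt x) := by
    rw [v.tendsto_filterAt_iff]
    constructor
    · filter_upwards [self_mem_nhdsWithin] with ρ hρ
      exact hv x ρ hρ
    · intro ε hε
      filter_upwards [Ioc_mem_nhdsGT_of_mem ⟨le_rfl, hε⟩] with ρ hρ
      exact Metric.closedBall_subset_closedBall hρ.2
  have hAvg : Tendsto (fun ρ : ℝ => ⨍ y in Metric.closedBall x ρ, ‖lam y - lam x‖ ∂μ')
      (𝓝[>] 0) (𝓝 0) := hxavg.comp hT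
  have hev : ∀ᶠ ρ in 𝓝[>] (0 : ℝ), ρ ∈ Ioo (0 : ℝ) (min ε₀ ε₁) :=
    Ioo_mem_nhdsGT_of_mem ⟨le_rfl, lt_min hε₀ hε₁⟩
  have hmain : ∀ᶠ ρ in 𝓝[>] (0 : ℝ),
      ‖q ρ - lam x‖ ≤ (Cd : ℝ) * (⨍ y in Metric.closedBall x ρ, ‖lam y - lam x‖ ∂μ') ∧
      S (Metric.ball x ρ) / μ (Metric.ball x ρ) = ENNReal.ofReal (q ρ) := by
    filter_upwards [hev] with ρ hρ
    obtain ⟨hρ0, hρm⟩ := hρ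
    have hρε₀ : ρ < ε₀ := hρm.trans_le (min_le_left _ _)
    have hρε₁ : ρ < ε₁ := hρm.trans_le (min_le_right _ _)
    have hKsub : Metric.closedBall x ρ ⊆ Ω :=
      (Metric.closedBall_subset_ball hρε₀).trans hball₀
    have hBsub : Metric.ball x ρ ⊆ Ω := Metric.ball_subset_closedBall.trans hKsub
    have hKfin : μ (Metric.closedBall x ρ) < ∞ :=
      ((measure_mono ((Metric.closedBall_subset_closedBall hρε₁.le).trans hcb)).trans_lt hs₀fin)
    have hBfin : μ (Metric.ball x ρ) < ∞ :=
      (measure_mono Metric.ball_subset_closedBall).trans_lt hKfin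
    have hBpos : 0 < μ (Metric.ball x ρ) := hxpos ρ hρ0
    have hKle : μ (Metric.closedBall x ρ) ≤ Cd * μ (Metric.ball x ρ) := by
      have h2 := hdoubling x hxΩ (2 * ρ) (by linarith)
      rw [show (2 : ℝ) * ρ / 2 = ρ by ring] at h2
      exact (measure_mono (Metric.closedBall_subset_ball (by linarith))).trans h2
    set bR := (μ (Metric.ball x ρ)).toReal with hbRdef
    set kR := (μ (Metric.closedBall x ρ)).toReal with hkRdef
    have hbRpos : 0 < bR := ENNReal.toReal_pos hBpos.ne' hBfin.ne
    have hkRle : kR ≤ (Cd : ℝ) * bR := by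
      rw [hbRdef, hkRdef, ← ENNReal.coe_toReal (r := Cd), ← ENNReal.toReal_mul]
      exact ENNReal.toReal_mono
        (ENNReal.mul_ne_top ENNReal.coe_ne_top hBfin.ne) hKle
    have hkRpos : 0 < kR :=
      lt_of_lt_of_le hbRpos (ENNReal.toReal_mono hKfin.ne
        (measure_mono Metric.ball_subset_closedBall))
    have hIK : IntegrableOn lam (Metric.closedBall x ρ) μ := by
      rw [IntegrableOn, ← Measure.restrict_restrict_of_subset hKsub]
      exact hlamint.restrict
    have hIB : IntegrableOn lam (Metric.ball x ρ) μ :=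
      hIK.mono_set Metric.ball_subset_closedBall
    have hIKc : IntegrableOn (fun y => ‖lam y - lam x‖) (Metric.closedBall x ρ) μ :=
      (hIK.sub (integrableOn_const hKfin.ne)).norm
    -- the average over the closed ball, w.r.t. μ' and μ agree
    have havg_eq : ⨍ y in Metric.closedBall x ρ, ‖lam y - lam x‖ ∂μ'
        = kR⁻¹ * ∫ y in Metric.closedBall x ρ, ‖lam y - lam x‖ ∂μ := by
      rw [setAverage_eq, Measure.restrict_restrict_of_subset hKsub, hμ'def,
        measureReal_restrict_apply Metric.isClosed_closedBall.measurableSet,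
        inter_eq_self_of_subset_left hKsub, measureReal_def, smul_eq_mul]
    have hAnn : 0 ≤ ⨍ y in Metric.closedBall x ρ, ‖lam y - lam x‖ ∂μ' := by
      rw [havg_eq]
      exact mul_nonneg (inv_nonneg.2 hkRpos.le)
        (integral_nonneg fun y => norm_nonneg _)
    constructor
    · -- the bound
      have e1 : ∫ y in Metric.ball x ρ, (lam y - lam x) ∂μ
          = (∫ y in Metric.ball x ρ, lam y ∂μ) - lam x * bR := by
        rw [integral_sub hIB (integrableOn_const hBfin.ne), setIntegral_const,
          smul_eq_mul, mul_comm, measureReal_def]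
      have e2 : ‖∫ y in Metric.ball x ρ, (lam y - lam x) ∂μ‖
          ≤ ∫ y in Metric.ball x ρ, ‖lam y - lam x‖ ∂μ :=
        norm_integral_le_integral_norm _
      have e3 : ∫ y in Metric.ball x ρ, ‖lam y - lam x‖ ∂μ
          ≤ ∫ y in Metric.closedBall x ρ, ‖lam y - lam x‖ ∂μ :=
        setIntegral_mono_set hIKc (ae_of_all _ fun y => norm_nonneg _)
          (HasSubset.Subset.eventuallyLE Metric.ball_subset_closedBall)
      have e4 : q ρ - lam x = ((∫ y in Metric.ball x ρ, lam y ∂μ) - lam x * bR) / bR := by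
        rw [hqdef]
        field_simp
        rw [← hbRdef]
        rw [sub_mul, div_mul_cancel₀ _ hbRpos.ne']
      rw [e4, norm_div, Real.norm_eq_abs bR, abs_of_pos hbRpos, div_le_iff₀ hbRpos,
        ← e1]
      calc ‖∫ y in Metric.ball x ρ, (lam y - lam x) ∂μ‖
          ≤ ∫ y in Metric.closedBall x ρ, ‖lam y - lam x‖ ∂μ := e2.trans e3
        _ = kR * (⨍ y in Metric.closedBall x ρ, ‖lam y - lam x‖ ∂μ') := by
            rw [havg_eq, ← mul_assoc, mul_inv_cancel₀ hkRpos.ne', one_mul]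
        _ ≤ ((Cd : ℝ) * bR) * (⨍ y in Metric.closedBall x ρ, ‖lam y - lam x‖ ∂μ') := by
            exact mul_le_mul_of_nonneg_right hkRle hAnn
        _ = (Cd : ℝ) * (⨍ y in Metric.closedBall x ρ, ‖lam y - lam x‖ ∂μ') * bR := by
            ring
    · -- the identity
      rw [hrep _ Metric.isOpen_ball hBsub, hqdef]
      rw [ENNReal.ofReal_div_of_pos hbRpos, hbRdef, ENNReal.ofReal_toReal hBfin.ne]
  have hq : Tendsto (fun ρ => q ρ - lam x) (𝓝[>] (0 : ℝ)) (𝓝 0) := by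
    refine squeeze_zero_norm' (hmain.mono fun ρ h => h.1) ?_
    have := hAvg.const_mul (Cd : ℝ)
    simpa using this
  have hq' : Tendsto q (𝓝[>] (0 : ℝ)) (𝓝 (lam x)) := by
    have h := hq.add (tendsto_const_nhds (x := lam x) (f := 𝓝[>] (0:ℝ)))
    rw [zero_add] at h
    refine h.congr fun ρ => by ring
  refine Tendsto.congr' ?_ ((ENNReal.continuous_ofReal.tendsto (lam x)).comp hq')
  filter_upwards [hmain] with ρ h
  exact h.2.symm
end
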